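/- arXiv:1712.05598 — 2 statements merged into one kernel-verified Lean document; each statement's English description precedes it below -/
import Mathlib

section
/- For every real number r with 1 ≤ r ≤ √2, the two-dimensional Lebesgue measure of B(0, r) ∩ Q, i.e. of the intersection of the closed Euclidean disc of radius r centered at the origin with the square Q = [−1,1] × [−1,1], equals 4·√(r² − 1) + r²·(π − 4·arccos(1/r)). -/
open Real MeasureTheory

/-- The periodic cell `Q = [-1,1] × [-1,1]` of the porous medium. -/
def Qcell : Set (EuclideanSpace ℝ (Fin 2)) :=
  {x | x 0 ∈ Set.Icc (-1 : ℝ) 1 ∧ x 1 ∈ Set.Icc (-1 : ℝ) 1}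


private lemma hasDerivAt_F (r : ℝ) (h1 : 1 ≤ r) {x : ℝ} (hx0 : 0 ≤ x) (hx1 : x < 1) :
    HasDerivAt (fun x : ℝ => (x * Real.sqrt (r^2 - x^2) + r^2 * Real.arcsin (x/r)) / 2)
      (Real.sqrt (r^2 - x^2)) x := by
  have hr0 : (0:ℝ) < r := lt_of_lt_of_le zero_lt_one h1
  have hu : 0 < r^2 - x^2 := by nlinarith
  have hsu : 0 < Real.sqrt (r^2 - x^2) := Real.sqrt_pos.2 hu
  have hmul : Real.sqrt (r^2 - x^2) * Real.sqrt (r^2 - x^2) = r^2 - x^2 :=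
    Real.mul_self_sqrt hu.le
  have hsq : HasDerivAt (fun x : ℝ => r^2 - x^2) (-(2*x)) x := by
    simpa using (hasDerivAt_pow 2 x).const_sub (r^2)
  have hs : HasDerivAt (fun x : ℝ => Real.sqrt (r^2 - x^2))
      ((1 / (2 * Real.sqrt (r^2 - x^2))) * (-(2*x))) x :=
    (Real.hasDerivAt_sqrt hu.ne').comp x hsq
  have hxr1 : x / r < 1 := by
    rw [div_lt_one hr0]; linarith
  have hxr0 : (0:ℝ) ≤ x / r := div_nonneg hx0 hr0.le
  have harc : HasDerivAt (fun x : ℝ => Real.arcsin (x/r))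
      ((1 / Real.sqrt (1 - (x/r)^2)) * (1/r)) x := by
    have hin : HasDerivAt (fun x : ℝ => x / r) (1/r) x := by
      simpa using (hasDerivAt_id x).div_const r
    exact (Real.hasDerivAt_arcsin (by linarith) (ne_of_lt hxr1)).comp x hin
  have hsqrt1 : Real.sqrt (1 - (x/r)^2) = Real.sqrt (r^2 - x^2) / r := by
    have : 1 - (x/r)^2 = (r^2 - x^2) / r^2 := by field_simp
    rw [this, Real.sqrt_div hu.le, Real.sqrt_sq hr0.le]
  have hD : HasDerivAt (fun x : ℝ => (x * Real.sqrt (r^2 - x^2) + r^2 * Real.arcsin (x/r)) / 2)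
      ((1 * Real.sqrt (r^2 - x^2) + x * ((1 / (2 * Real.sqrt (r^2 - x^2))) * (-(2*x)))
        + r^2 * ((1 / Real.sqrt (1 - (x/r)^2)) * (1/r))) / 2) x :=
    (((hasDerivAt_id x).mul hs).add (harc.const_mul (r^2))).div_const 2
  convert hD using 1
  rw [hsqrt1]
  field_simp
  linear_combination hmul

private lemma integral_J (r a : ℝ) (h1 : 1 ≤ r) (ha : a = Real.sqrt (r^2 - 1)) (ha1 : a ≤ 1) :
    ∫ x in a..1, Real.sqrt (r^2 - x^2)
      = r^2 / 2 * (Real.arcsin (1/r) - Real.arcsin (a/r)) := by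
  have hr0 : (0:ℝ) < r := lt_of_lt_of_le zero_lt_one h1
  have ha0 : 0 ≤ a := ha ▸ Real.sqrt_nonneg _
  have ha2 : a^2 = r^2 - 1 := by rw [ha]; exact Real.sq_sqrt (by nlinarith)
  have hcont : Continuous fun x : ℝ => (x * Real.sqrt (r^2 - x^2) + r^2 * Real.arcsin (x/r)) / 2 := by
    have := Real.continuous_arcsin
    fun_prop
  have hint : IntervalIntegrable (fun x : ℝ => Real.sqrt (r^2 - x^2)) volume a 1 := by
    apply Continuous.intervalIntegrable; fun_prop
  have hftc := intervalIntegral.integral_eq_sub_of_hasDeriv_right_of_le ha1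
    hcont.continuousOn
    (fun x hx => (hasDerivAt_F r h1 (le_trans ha0 hx.1.le) hx.2).hasDerivWithinAt)
    hint
  rw [hftc]
  have h1s : Real.sqrt (r^2 - 1^2) = a := by rw [ha]; norm_num
  have has : Real.sqrt (r^2 - a^2) = 1 := by rw [ha2]; norm_num
  rw [h1s, has]
  ring

private lemma integral_I (r : ℝ) (h1 : 1 ≤ r) (h2 : r ≤ Real.sqrt 2) :
    ∫ x in (-1:ℝ)..1, 2 * min 1 (Real.sqrt (r^2 - x^2))
      = 4 * Real.sqrt (r ^ 2 - 1) + r ^ 2 * (π - 4 * Real.arccos (1 / r)) := by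
  have hr0 : (0:ℝ) < r := lt_of_lt_of_le zero_lt_one h1
  set a : ℝ := Real.sqrt (r^2 - 1) with ha
  have ha0 : 0 ≤ a := Real.sqrt_nonneg _
  have hr2 : r^2 ≤ 2 := by
    nlinarith [Real.sq_sqrt (show (0:ℝ) ≤ 2 by norm_num), Real.sqrt_nonneg 2]
  have ha2 : a^2 = r^2 - 1 := Real.sq_sqrt (by nlinarith)
  have ha1 : a ≤ 1 := by nlinarith [ha2, ha0]
  have hcont : Continuous fun x : ℝ => 2 * min 1 (Real.sqrt (r^2 - x^2)) := by fun_prop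
  have hint : ∀ u v : ℝ, IntervalIntegrable (fun x : ℝ => 2 * min 1 (Real.sqrt (r^2 - x^2))) volume u v :=
    fun u v => hcont.intervalIntegrable u v
  -- split
  have hsplit : ∫ x in (-1:ℝ)..1, 2 * min 1 (Real.sqrt (r^2 - x^2))
      = (∫ x in (-1:ℝ)..(-a), 2 * min 1 (Real.sqrt (r^2 - x^2)))
        + (∫ x in (-a:ℝ)..a, 2 * min 1 (Real.sqrt (r^2 - x^2)))
        + (∫ x in (a:ℝ)..1, 2 * min 1 (Real.sqrt (r^2 - x^2))) := by
    rw [intervalIntegral.integral_add_adjacent_intervals (hint _ _) (hint _ _),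
      intervalIntegral.integral_add_adjacent_intervals (hint _ _) (hint _ _)]
  -- middle piece
  have hmid : ∫ x in (-a:ℝ)..a, 2 * min 1 (Real.sqrt (r^2 - x^2)) = 4 * a := by
    have : ∫ x in (-a:ℝ)..a, 2 * min 1 (Real.sqrt (r^2 - x^2)) = ∫ _ in (-a:ℝ)..a, (2:ℝ) := by
      apply intervalIntegral.integral_congr
      intro x hx
      rw [Set.uIcc_of_le (by linarith), Set.mem_Icc] at hx
      have hx2 : x^2 ≤ a^2 := sq_le_sq' hx.1 hx.2
      have : (1:ℝ) ≤ Real.sqrt (r^2 - x^2) := by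
        rw [show (1:ℝ) = Real.sqrt 1 by simp]
        apply Real.sqrt_le_sqrt; nlinarith
      simp [min_eq_left this]
    rw [this, intervalIntegral.integral_const, smul_eq_mul]
    ring
  -- right piece
  have hright : ∫ x in (a:ℝ)..1, 2 * min 1 (Real.sqrt (r^2 - x^2))
      = 2 * (r^2 / 2 * (Real.arcsin (1/r) - Real.arcsin (a/r))) := by
    have he : ∫ x in (a:ℝ)..1, 2 * min 1 (Real.sqrt (r^2 - x^2))
        = ∫ x in (a:ℝ)..1, 2 * Real.sqrt (r^2 - x^2) := by
      apply intervalIntegral.integral_congr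
      intro x hx
      rw [Set.uIcc_of_le ha1, Set.mem_Icc] at hx
      have hx2 : a^2 ≤ x^2 := by
        have := hx.1; nlinarith [ha0]
      have : Real.sqrt (r^2 - x^2) ≤ 1 := by
        rw [show (1:ℝ) = Real.sqrt 1 by simp]
        apply Real.sqrt_le_sqrt; nlinarith
      simp [min_eq_right this]
    rw [he, intervalIntegral.integral_const_mul, integral_J r a h1 ha ha1]
  -- left piece
  have hleft : ∫ x in (-1:ℝ)..(-a), 2 * min 1 (Real.sqrt (r^2 - x^2))
      = 2 * (r^2 / 2 * (Real.arcsin (1/r) - Real.arcsin (a/r))) := by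
    have := intervalIntegral.integral_comp_neg (a := a) (b := 1)
      (fun x : ℝ => 2 * min 1 (Real.sqrt (r^2 - x^2)))
    simp only [neg_sq] at this
    rw [← this, hright]
  rw [hsplit, hmid, hleft, hright]
  -- trig identities
  have hinv0 : (0:ℝ) ≤ 1/r := by positivity
  have harccos : Real.arcsin (a/r) = Real.arccos (1/r) := by
    rw [Real.arccos_eq_arcsin hinv0]
    congr 1
    rw [show 1 - (1/r)^2 = (r^2-1)/r^2 by field_simp]
    rw [Real.sqrt_div (by nlinarith), Real.sqrt_sq hr0.le, ha]
  have harcsin : Real.arcsin (1/r) = π/2 - Real.arccos (1/r) := by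
    rw [Real.arccos]; ring
  rw [harccos, harcsin]
  ring

/-- Configuration B: for `1 ≤ r ≤ √2`, the area of the solid region `B(0,r) ∩ Q`
equals `4 √(r² - 1) + r² (π - 4 arccos (1/r))`. -/
theorem configB_solid_area (r : ℝ) (h1 : 1 ≤ r) (h2 : r ≤ Real.sqrt 2) :
    volume (Metric.closedBall (0 : EuclideanSpace ℝ (Fin 2)) r ∩ Qcell)
      = ENNReal.ofReal (4 * Real.sqrt (r ^ 2 - 1) + r ^ 2 * (π - 4 * Real.arccos (1 / r))) := by
  have hr0 : (0:ℝ) < r := lt_of_lt_of_le zero_lt_one h1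
  set S : Set (ℝ × ℝ) := {p | p.1^2 + p.2^2 ≤ r^2 ∧ |p.1| ≤ 1 ∧ |p.2| ≤ 1} with hSdef
  have hSm : MeasurableSet S := by
    apply IsClosed.measurableSet
    have h1c : Continuous fun p : ℝ × ℝ => p.1^2 + p.2^2 := by fun_prop
    have h2c : Continuous fun p : ℝ × ℝ => |p.1| := continuous_fst.abs
    have h3c : Continuous fun p : ℝ × ℝ => |p.2| := continuous_snd.abs
    exact (isClosed_le h1c continuous_const).inter
      ((isClosed_le h2c continuous_const).inter (isClosed_le h3c continuous_const))
  have hmp : MeasurePreserving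
      ((MeasurableEquiv.finTwoArrow : (Fin 2 → ℝ) ≃ᵐ ℝ × ℝ) ∘
        (MeasurableEquiv.toLp 2 (Fin 2 → ℝ)).symm) volume volume :=
    (volume_preserving_finTwoArrow ℝ).comp
      (EuclideanSpace.volume_preserving_symm_measurableEquiv_toLp (Fin 2))
  have hpre : Metric.closedBall (0 : EuclideanSpace ℝ (Fin 2)) r ∩ Qcell
      = ((MeasurableEquiv.finTwoArrow : (Fin 2 → ℝ) ≃ᵐ ℝ × ℝ) ∘
        (MeasurableEquiv.toLp 2 (Fin 2 → ℝ)).symm) ⁻¹' S := by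
    ext x
    have hnorm : ‖x‖ = Real.sqrt ((x 0)^2 + (x 1)^2) := by
      rw [EuclideanSpace.norm_eq]
      congr 1
      rw [Fin.sum_univ_two]
      simp [sq_abs]
    constructor
    · rintro ⟨hb, hq⟩
      rw [Metric.mem_closedBall, dist_zero_right, hnorm] at hb
      refine ⟨?_, abs_le.2 hq.1, abs_le.2 hq.2⟩
      have := Real.sqrt_le_sqrt_iff (x := (x 0)^2 + (x 1)^2) (y := r^2) (by positivity)
      rw [Real.sqrt_sq hr0.le] at this
      exact this.1 hb
    · rintro ⟨hb, h01, h11⟩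
      refine ⟨?_, abs_le.1 h01, abs_le.1 h11⟩
      rw [Metric.mem_closedBall, dist_zero_right, hnorm,
        show r = Real.sqrt (r^2) from (Real.sqrt_sq hr0.le).symm]
      exact Real.sqrt_le_sqrt hb
  rw [hpre, hmp.measure_preimage hSm.nullMeasurableSet]
  -- Fubini
  have key : ∀ x : ℝ, (volume : Measure ℝ) (Prod.mk x ⁻¹' S)
      = Set.indicator (Set.Icc (-1:ℝ) 1)
          (fun x => ENNReal.ofReal (2 * min 1 (Real.sqrt (r^2 - x^2)))) x := by
    intro x
    by_cases hx : |x| ≤ 1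
    · have hxm : x ∈ Set.Icc (-1:ℝ) 1 := abs_le.1 hx
      have hx2 : x^2 ≤ 1 := by nlinarith [abs_nonneg x, sq_abs x]
      have hrx : 0 ≤ r^2 - x^2 := by nlinarith
      have hset : Prod.mk x ⁻¹' S
          = Set.Icc (-(min 1 (Real.sqrt (r^2 - x^2)))) (min 1 (Real.sqrt (r^2 - x^2))) := by
        ext y
        simp only [Set.mem_preimage, hSdef, Set.mem_setOf_eq, Set.mem_Icc, ← abs_le]
        constructor
        · rintro ⟨hc, -, hy1⟩
          refine le_min hy1 ?_
          rw [show |y| = Real.sqrt (y^2) from (Real.sqrt_sq_eq_abs y).symm]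
          exact Real.sqrt_le_sqrt (by nlinarith)
        · intro hy
          have hy1 : |y| ≤ 1 := le_trans hy (min_le_left _ _)
          have hy2 : |y| ≤ Real.sqrt (r^2 - x^2) := le_trans hy (min_le_right _ _)
          have : y^2 ≤ r^2 - x^2 := by
            rw [show |y| = Real.sqrt (y^2) from (Real.sqrt_sq_eq_abs y).symm] at hy2
            exact (Real.sqrt_le_sqrt_iff hrx).1 hy2
          exact ⟨by nlinarith, hx, hy1⟩
      have hm0 : 0 ≤ min 1 (Real.sqrt (r^2 - x^2)) :=
        le_min zero_le_one (Real.sqrt_nonneg _)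
      rw [hset, Real.volume_Icc, Set.indicator_of_mem hxm]
      congr 1
      ring
    · have hset : Prod.mk x ⁻¹' S = ∅ := by
        ext y
        simp only [Set.mem_preimage, hSdef, Set.mem_setOf_eq, Set.mem_empty_iff_false, iff_false]
        rintro ⟨-, hx1, -⟩
        exact hx hx1
      have hxm : x ∉ Set.Icc (-1:ℝ) 1 := fun h => hx (abs_le.2 h)
      rw [hset, Set.indicator_of_notMem hxm]
      simp
  rw [show (volume : Measure (ℝ × ℝ)) = (volume : Measure ℝ).prod volume from Measure.volume_eq_prod ℝ ℝ,
    Measure.prod_apply hSm, lintegral_congr key,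
    lintegral_indicator measurableSet_Icc]
  have hcont : Continuous fun x : ℝ => 2 * min 1 (Real.sqrt (r^2 - x^2)) := by fun_prop
  rw [← ofReal_integral_eq_lintegral_ofReal (hcont.integrableOn_Icc)
    (Filter.Eventually.of_forall fun x => by positivity)]
  congr 1
  rw [MeasureTheory.integral_Icc_eq_integral_Ioc,
    ← intervalIntegral.integral_of_le (by norm_num : (-1:ℝ) ≤ 1)]
  exact integral_I r h1 h2
end

section
/- For every real number r with 1 < r < √2, the one-dimensional Lebesgue measure of the set {θ ∈ [0, 2π) : (r·cos θ, r·sin θ) ∈ Q} of angles whose corresponding point on the circle of radius r lies in the square Q = [−1,1] × [−1,1] equals 2π − 8·arccos(1/r); moreover 0 < 2π − 8·arccos(1/r) < 2π. Consequently the free boundary in configuration B, consisting of the circular arcs of radius r lying inside Q, has total length L(r) = r·(2π − 8·arccos(1/r)). -/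
open Real MeasureTheory

/-- The circle of radius `r` centered at the origin, parametrized by angle. -/
noncomputable def circCurve (r : ℝ) : ℝ → EuclideanSpace ℝ (Fin 2) :=
  fun θ => (WithLp.equiv 2 (Fin 2 → ℝ)).symm ![r * Real.cos θ, r * Real.sin θ]

private lemma disjIcc {a b c d : ℝ} (h : b < c) :
    Disjoint (Set.Icc a b) (Set.Icc c d) := by
  rw [Set.disjoint_left]
  rintro x ⟨_, hb⟩ ⟨hc, _⟩
  linarith

/-- on `[0, π]`, `cos x ≤ c ↔ arccos c ≤ x` for `c ∈ [-1,1]`. -/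
private lemma cos_le_iff' {c x : ℝ} (hc1 : -1 ≤ c) (hc2 : c ≤ 1)
    (hx : x ∈ Set.Icc 0 π) : Real.cos x ≤ c ↔ Real.arccos c ≤ x := by
  conv_lhs => rw [← Real.cos_arccos hc1 hc2]
  exact Real.strictAntiOn_cos.le_iff_ge hx ⟨Real.arccos_nonneg c, Real.arccos_le_pi c⟩

/-- Key quadrant lemma. -/
private lemma quadrant {c φ : ℝ} (hc0 : 0 < c) (hc1 : c < 1)
    (hφ : φ ∈ Set.Icc 0 (π / 2)) :
    (|Real.cos φ| ≤ c ∧ |Real.sin φ| ≤ c) ↔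
      Real.arccos c ≤ φ ∧ φ ≤ π / 2 - Real.arccos c := by
  have hπ := Real.pi_pos
  obtain ⟨hφ0, hφ2⟩ := hφ
  have hcosnn : 0 ≤ Real.cos φ :=
    Real.cos_nonneg_of_mem_Icc ⟨by linarith, hφ2⟩
  have hsinnn : 0 ≤ Real.sin φ :=
    Real.sin_nonneg_of_nonneg_of_le_pi hφ0 (by linarith)
  rw [abs_of_nonneg hcosnn, abs_of_nonneg hsinnn]
  have h1 : Real.cos φ ≤ c ↔ Real.arccos c ≤ φ :=
    cos_le_iff' (by linarith) hc1.le ⟨hφ0, by linarith⟩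
  have h2 : Real.sin φ ≤ c ↔ φ ≤ π / 2 - Real.arccos c := by
    rw [← Real.cos_pi_div_two_sub φ,
      cos_le_iff' (by linarith) hc1.le ⟨by linarith, by linarith⟩]
    constructor <;> intro h <;> linarith
  rw [h1, h2]

/-- Configuration B: for `1 < r < √2`, the set of angles `θ ∈ [0, 2π)` whose point
`(r cos θ, r sin θ)` lies in the cell `Q = [-1,1]²` has Lebesgue measure
`2π - 8 arccos (1/r)`, this quantity lies strictly between `0` and `2π`, and the
free boundary (the circular arcs of radius `r` inside `Q`) has total length
`L(r) = r (2π - 8 arccos (1/r))`. -/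
theorem configB_interface_length (r : ℝ) (h1 : 1 < r) (h2 : r < Real.sqrt 2)
    (S : Set ℝ) (hS : S = {θ | θ ∈ Set.Ico 0 (2 * π) ∧ circCurve r θ ∈ Qcell}) :
    volume S = ENNReal.ofReal (2 * π - 8 * Real.arccos (1 / r)) ∧
    0 < 2 * π - 8 * Real.arccos (1 / r) ∧
    2 * π - 8 * Real.arccos (1 / r) < 2 * π ∧
    ∫ θ in S, ‖deriv (circCurve r) θ‖ = r * (2 * π - 8 * Real.arccos (1 / r)) := by
  have hπ := Real.pi_pos
  have hr0 : (0 : ℝ) < r := by linarith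
  have hc0 : (0 : ℝ) < 1 / r := by positivity
  have hc1 : 1 / r < 1 := by rw [div_lt_one hr0]; exact h1
  have hα0 : 0 < Real.arccos (1 / r) := Real.arccos_pos.2 hc1
  -- arccos (1/r) < π/4
  have hα4 : Real.arccos (1 / r) < π / 4 := by
    have hcgt : Real.sqrt 2 / 2 < 1 / r := by
      rw [div_lt_div_iff₀ (by norm_num) hr0]
      nlinarith [Real.sq_sqrt (by norm_num : (2:ℝ) ≥ 0), Real.sqrt_nonneg 2]
    calc Real.arccos (1 / r) < Real.arccos (Real.sqrt 2 / 2) := by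
            exact Real.strictAntiOn_arccos ⟨by linarith, by
              nlinarith [Real.sq_sqrt (by norm_num : (2:ℝ) ≥ 0)]⟩ ⟨by linarith, hc1.le⟩ hcgt
      _ = π / 4 := by
            rw [← Real.cos_pi_div_four]
            exact Real.arccos_cos (by linarith) (by linarith)
  -- membership in Qcell rewritten
  have habs : ∀ x : ℝ, ((-1 ≤ r * x ∧ r * x ≤ 1) ↔ |x| ≤ 1 / r) := by
    intro x
    have h1r : 1 / r * r = 1 := by field_simp
    rw [abs_le]
    constructor <;> rintro ⟨ha, hb⟩ <;> constructor <;> nlinarith [h1r, hr0]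
  have hmem : ∀ θ : ℝ, (circCurve r θ ∈ Qcell ↔
      (|Real.cos θ| ≤ 1 / r ∧ |Real.sin θ| ≤ 1 / r)) := by
    intro θ
    have e0 : circCurve r θ 0 = r * Real.cos θ := rfl
    have e1 : circCurve r θ 1 = r * Real.sin θ := rfl
    simp only [Qcell, Set.mem_setOf_eq, e0, e1, Set.mem_Icc]
    rw [habs (Real.cos θ), habs (Real.sin θ)]
  -- the four-interval description
  have hSeq : S = Set.Icc (Real.arccos (1/r)) (π/2 - Real.arccos (1/r))
      ∪ Set.Icc (π/2 + Real.arccos (1/r)) (π - Real.arccos (1/r))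
      ∪ Set.Icc (π + Real.arccos (1/r)) (3*π/2 - Real.arccos (1/r))
      ∪ Set.Icc (3*π/2 + Real.arccos (1/r)) (2*π - Real.arccos (1/r)) := by
    rw [hS]
    ext θ
    simp only [Set.mem_setOf_eq, Set.mem_Ico, Set.mem_union, Set.mem_Icc, hmem θ]
    constructor
    · rintro ⟨⟨hθ0, hθ2π⟩, hcs⟩
      rcases le_or_gt θ (π / 2) with hq1 | hq1
      · left; left; left
        have := (quadrant hc0 hc1 ⟨hθ0, hq1⟩).1 hcs
        exact ⟨this.1, this.2⟩
      · rcases le_or_gt θ π with hq2 | hq2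
        · left; left; right
          have hφ : π - θ ∈ Set.Icc 0 (π / 2) := ⟨by linarith, by linarith⟩
          have hcs' : |Real.cos (π - θ)| ≤ 1/r ∧ |Real.sin (π - θ)| ≤ 1/r := by
            rw [Real.cos_pi_sub, Real.sin_pi_sub, abs_neg]; exact hcs
          have := (quadrant hc0 hc1 hφ).1 hcs'
          constructor <;> linarith [this.1, this.2]
        · rcases le_or_gt θ (3 * π / 2) with hq3 | hq3
          · left; right
            have hφ : θ - π ∈ Set.Icc 0 (π / 2) := ⟨by linarith, by linarith⟩
            have hcs' : |Real.cos (θ - π)| ≤ 1/r ∧ |Real.sin (θ - π)| ≤ 1/r := by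
              rw [show θ - π = -(π - θ) by ring, Real.cos_neg, Real.sin_neg,
                Real.cos_pi_sub, Real.sin_pi_sub, abs_neg, abs_neg]
              exact hcs
            have := (quadrant hc0 hc1 hφ).1 hcs'
            constructor <;> linarith [this.1, this.2]
          · right
            have hφ : 2 * π - θ ∈ Set.Icc 0 (π / 2) := ⟨by linarith, by linarith⟩
            have hcs' : |Real.cos (2*π - θ)| ≤ 1/r ∧ |Real.sin (2*π - θ)| ≤ 1/r := by
              rw [Real.cos_two_pi_sub, Real.sin_two_pi_sub, abs_neg]; exact hcs
            have := (quadrant hc0 hc1 hφ).1 hcs'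
            constructor <;> linarith [this.1, this.2]
    · rintro (((⟨u, v⟩ | ⟨u, v⟩) | ⟨u, v⟩) | ⟨u, v⟩)
      · refine ⟨⟨by linarith, by linarith⟩, ?_⟩
        exact (quadrant hc0 hc1 ⟨by linarith, by linarith⟩).2 ⟨by linarith, by linarith⟩
      · refine ⟨⟨by linarith, by linarith⟩, ?_⟩
        have := (quadrant hc0 hc1
          (show π - θ ∈ Set.Icc 0 (π/2) from ⟨by linarith, by linarith⟩)).2
          ⟨by linarith, by linarith⟩
        rwa [Real.cos_pi_sub, Real.sin_pi_sub, abs_neg] at this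
      · refine ⟨⟨by linarith, by linarith⟩, ?_⟩
        have := (quadrant hc0 hc1
          (show θ - π ∈ Set.Icc 0 (π/2) from ⟨by linarith, by linarith⟩)).2
          ⟨by linarith, by linarith⟩
        rwa [show θ - π = -(π - θ) by ring, Real.cos_neg, Real.sin_neg,
          Real.cos_pi_sub, Real.sin_pi_sub, abs_neg, abs_neg] at this
      · refine ⟨⟨by linarith, by linarith⟩, ?_⟩
        have := (quadrant hc0 hc1
          (show 2*π - θ ∈ Set.Icc 0 (π/2) from ⟨by linarith, by linarith⟩)).2
          ⟨by linarith, by linarith⟩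
        rwa [Real.cos_two_pi_sub, Real.sin_two_pi_sub, abs_neg] at this
  -- measure computation
  have hLpos : 0 < 2 * π - 8 * Real.arccos (1 / r) := by linarith
  have hvol : volume S = ENNReal.ofReal (2 * π - 8 * Real.arccos (1 / r)) := by
    rw [hSeq]
    have d12 : Disjoint (Set.Icc (Real.arccos (1/r)) (π/2 - Real.arccos (1/r)))
        (Set.Icc (π/2 + Real.arccos (1/r)) (π - Real.arccos (1/r))) := disjIcc (by linarith)
    have d3 : Disjoint (Set.Icc (Real.arccos (1/r)) (π/2 - Real.arccos (1/r))
        ∪ Set.Icc (π/2 + Real.arccos (1/r)) (π - Real.arccos (1/r)))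
        (Set.Icc (π + Real.arccos (1/r)) (3*π/2 - Real.arccos (1/r))) :=
      Set.disjoint_union_left.2 ⟨disjIcc (by linarith), disjIcc (by linarith)⟩
    have d4 : Disjoint (Set.Icc (Real.arccos (1/r)) (π/2 - Real.arccos (1/r))
        ∪ Set.Icc (π/2 + Real.arccos (1/r)) (π - Real.arccos (1/r))
        ∪ Set.Icc (π + Real.arccos (1/r)) (3*π/2 - Real.arccos (1/r)))
        (Set.Icc (3*π/2 + Real.arccos (1/r)) (2*π - Real.arccos (1/r))) :=
      Set.disjoint_union_left.2 ⟨Set.disjoint_union_left.2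
        ⟨disjIcc (by linarith), disjIcc (by linarith)⟩, disjIcc (by linarith)⟩
    rw [measure_union d4 measurableSet_Icc, measure_union d3 measurableSet_Icc,
      measure_union d12 measurableSet_Icc]
    rw [Real.volume_Icc, Real.volume_Icc, Real.volume_Icc, Real.volume_Icc]
    rw [← ENNReal.ofReal_add (by linarith) (by linarith),
      ← ENNReal.ofReal_add (by linarith) (by linarith),
      ← ENNReal.ofReal_add (by linarith) (by linarith)]
    congr 1
    ring
  refine ⟨hvol, hLpos, by linarith, ?_⟩
  -- derivative and norm
  have hderiv : ∀ θ : ℝ, HasDerivAt (circCurve r)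
      ((WithLp.equiv 2 (Fin 2 → ℝ)).symm ![-(r * Real.sin θ), r * Real.cos θ]) θ := by
    intro θ
    have h : HasDerivAt (fun θ : ℝ => (![r * Real.cos θ, r * Real.sin θ] : Fin 2 → ℝ))
        ![-(r * Real.sin θ), r * Real.cos θ] θ := by
      rw [hasDerivAt_pi]
      intro i
      fin_cases i
      · simpa using ((Real.hasDerivAt_cos θ).const_mul r)
      · simpa using ((Real.hasDerivAt_sin θ).const_mul r)
    exact ((EuclideanSpace.equiv (Fin 2) ℝ).symm.hasFDerivAt.comp_hasDerivAt θ h :)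
  have hnorm : ∀ θ : ℝ, ‖deriv (circCurve r) θ‖ = r := by
    intro θ
    rw [(hderiv θ).deriv, EuclideanSpace.norm_eq]
    have e0 : ((WithLp.equiv 2 (Fin 2 → ℝ)).symm ![-(r * Real.sin θ), r * Real.cos θ]) 0
        = -(r * Real.sin θ) := rfl
    have e1 : ((WithLp.equiv 2 (Fin 2 → ℝ)).symm ![-(r * Real.sin θ), r * Real.cos θ]) 1
        = r * Real.cos θ := rfl
    rw [Fin.sum_univ_two, e0, e1]
    have : ‖-(r * Real.sin θ)‖ ^ 2 + ‖r * Real.cos θ‖ ^ 2 = r ^ 2 := by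
      rw [Real.norm_eq_abs, Real.norm_eq_abs, sq_abs, sq_abs]
      nlinarith [Real.sin_sq_add_cos_sq θ]
    rw [this, Real.sqrt_sq hr0.le]
  calc ∫ θ in S, ‖deriv (circCurve r) θ‖ = ∫ _ in S, r := by
        apply setIntegral_congr_fun
        · rw [hSeq]
          exact ((measurableSet_Icc.union measurableSet_Icc).union measurableSet_Icc).union
            measurableSet_Icc
        · intro θ _; exact hnorm θ
    _ = (volume S).toReal • r := setIntegral_const r
    _ = r * (2 * π - 8 * Real.arccos (1 / r)) := by
        rw [hvol, ENNReal.toReal_ofReal hLpos.le, smul_eq_mul, mul_comm]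
end
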